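/- Let L/K be a finite field extension. Every subalgebra of End_K(L) containing L and contained in L ⋊ Aut_K(L) is of the form L ⋊ H = ⊕_{h∈H} L·h for a unique subgroup H of Aut_K(L). -/

import Mathlib

/-- The skew group algebra `L ⋊ Aut_K(L)` inside `End_K(L)`. -/
def skewGroupAlg (K L : Type*) [Field K] [Field L] [Algebra K L] :
    Subalgebra K (Module.End K L) :=
  Algebra.adjoin K (Set.range ⇑(Algebra.lmul K L) ∪
    Set.range fun g : L ≃ₐ[K] L => (g.toLinearMap : L →ₗ[K] L))

section aux

variable (K L : Type*) [Field K] [Field L] [Algebra K L]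

private lemma lmul_mul (a : L) (f : L →ₗ[K] L) : (Algebra.lmul K L a : L →ₗ[K] L) * f = a • f := by
  ext x; simp [Module.End.mul_apply]

private lemma e_mul (g h : L ≃ₐ[K] L) :
    (g.toLinearMap : L →ₗ[K] L) * h.toLinearMap = (g * h).toLinearMap := by
  ext x; simp [Module.End.mul_apply]

private lemma e_one : ((1 : L ≃ₐ[K] L).toLinearMap : L →ₗ[K] L) = 1 := by
  ext x; rfl

private lemma e_pow (g : L ≃ₐ[K] L) (n : ℕ) :
    ((g ^ n).toLinearMap : L →ₗ[K] L) = (g.toLinearMap : L →ₗ[K] L) ^ n := by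
  induction n with
  | zero => simpa using e_one K L
  | succ n ih => rw [pow_succ, pow_succ, ← ih, e_mul]

private lemma li_auts : LinearIndependent L (fun g : L ≃ₐ[K] L => (g.toLinearMap : L →ₗ[K] L)) := by
  have h := (linearIndependent_algHom_toLinearMap K L L).comp
    (fun g : L ≃ₐ[K] L => (g : L →ₐ[K] L)) AlgEquiv.coe_algHom_injective
  simpa only [Function.comp_def, AlgEquiv.toAlgHom_toLinearMap] using h

private lemma e_mul_smul (g : L ≃ₐ[K] L) (a : L) (y : L →ₗ[K] L) :
    (g.toLinearMap : L →ₗ[K] L) * (a • y) = g a • ((g.toLinearMap : L →ₗ[K] L) * y) := by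
  ext x; simp [Module.End.mul_apply]

private lemma skew_le_span :
    (skewGroupAlg K L : Set (Module.End K L)) ⊆
      (Submodule.span L (Set.range fun g : L ≃ₐ[K] L => (g.toLinearMap : L →ₗ[K] L)) :
        Set (L →ₗ[K] L)) := by
  set S := Submodule.span L (Set.range fun g : L ≃ₐ[K] L => (g.toLinearMap : L →ₗ[K] L)) with hS
  have h1 : (1 : L →ₗ[K] L) ∈ S := by
    rw [← e_one K L]; exact Submodule.subset_span ⟨1, rfl⟩
  have hmul : ∀ x ∈ S, ∀ y ∈ S, x * y ∈ S := by
    intro x hx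
    induction hx using Submodule.span_induction with
    | mem x hxm =>
      obtain ⟨g, rfl⟩ := hxm
      intro y hy
      induction hy using Submodule.span_induction with
      | mem y hym =>
        obtain ⟨h, rfl⟩ := hym
        rw [e_mul]; exact Submodule.subset_span ⟨g * h, rfl⟩
      | zero => simpa using S.zero_mem
      | add y z hy hz ihy ihz => rw [mul_add]; exact S.add_mem ihy ihz
      | smul a y hy ihy => rw [e_mul_smul]; exact S.smul_mem _ ihy
    | zero => intro y hy; simpa using S.zero_mem
    | add x₁ x₂ hx1 hx2 ih1 ih2 => intro y hy; rw [add_mul]; exact S.add_mem (ih1 y hy) (ih2 y hy)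
    | smul a x hx ih =>
      intro y hy
      have : (a • x) * y = a • (x * y) := by ext z; simp [Module.End.mul_apply]
      rw [this]; exact S.smul_mem _ (ih y hy)
  have hlm : ∀ a : L, (Algebra.lmul K L a : L →ₗ[K] L) ∈ S := by
    intro a
    have : (Algebra.lmul K L a : L →ₗ[K] L) = a • (1 : L →ₗ[K] L) := by
      ext x; simp
    rw [this]; exact S.smul_mem _ h1
  let SA : Subalgebra K (Module.End K L) :=
    { carrier := S
      mul_mem' := fun {x y} hx hy => hmul x hx y hy
      one_mem' := h1
      add_mem' := fun {x y} hx hy => S.add_mem hx hy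
      zero_mem' := S.zero_mem
      algebraMap_mem' := fun c => by
        have : algebraMap K (Module.End K L) c = (algebraMap K L c) • (1 : L →ₗ[K] L) := by
          ext x; simp [Module.algebraMap_end_apply, Algebra.smul_def]
        show algebraMap K (Module.End K L) c ∈ S
        rw [this]; exact S.smul_mem _ h1 }
  have hle : skewGroupAlg K L ≤ SA := by
    apply Algebra.adjoin_le
    rintro f (⟨a, rfl⟩ | ⟨g, rfl⟩)
    · exact hlm a
    · exact Submodule.subset_span ⟨g, rfl⟩
  exact fun x hx => hle hx

end aux

section key

variable (K L : Type*) [Field K] [Field L] [Algebra K L] [FiniteDimensional K L]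

private lemma key (B : Subalgebra K (Module.End K L)) (hLB : (Algebra.lmul K L).range ≤ B)
    (f : L →ₗ[K] L) (hf : f ∈ B) (a : (L ≃ₐ[K] L) → L)
    (hrep : ∑ g, a g • (g.toLinearMap : L →ₗ[K] L) = f) (g0 : L ≃ₐ[K] L) :
    a g0 • (g0.toLinearMap : L →ₗ[K] L) ∈ B := by
  classical
  set Φ : L → ((L ≃ₐ[K] L) → L) := fun c g => g c with hΦ
  -- the delta function at g0 lies in the L-span of the range of Φ
  have hsingle : Pi.single g0 (1 : L) ∈ Submodule.span L (Set.range Φ) := by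
    by_contra hx
    obtain ⟨φ, hφ0, hφ⟩ := Submodule.exists_dual_map_eq_bot_of_notMem hx inferInstance
    have hv : ∀ c : L, φ (Φ c) = 0 := by
      intro c
      have hm : Φ c ∈ Submodule.span L (Set.range Φ) := Submodule.subset_span ⟨c, rfl⟩
      have : φ (Φ c) ∈ (Submodule.span L (Set.range Φ)).map φ := ⟨Φ c, hm, rfl⟩
      rw [hφ] at this
      exact (Submodule.mem_bot L).mp this
    set μ : (L ≃ₐ[K] L) → L := fun g => φ (Pi.single g 1) with hμdef
    have hrepr : ∀ v : (L ≃ₐ[K] L) → L, φ v = ∑ g, v g * μ g := by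
      intro v
      have hv' : v = ∑ g, v g • (Pi.single g (1 : L) : (L ≃ₐ[K] L) → L) := by
        funext g'
        simp [Finset.sum_apply, Pi.single_apply, mul_ite]
      conv_lhs => rw [hv']
      rw [map_sum]
      simp [hμdef, smul_eq_mul]
    have hzero : (∑ g, μ g • (g.toLinearMap : L →ₗ[K] L)) = 0 := by
      ext c
      have := hv c
      rw [hrepr (Φ c)] at this
      simpa [hΦ, mul_comm] using this
    have hall : ∀ g, μ g = 0 := by
      have li := Fintype.linearIndependent_iff.mp (li_auts K L)
      exact li μ hzero
    exact hφ0 (by rw [hrepr]; simp [hall])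
  obtain ⟨c, hc⟩ := Finsupp.mem_span_range_iff_exists_finsupp.mp hsingle
  have hdelta : ∀ g : L ≃ₐ[K] L,
      (∑ i ∈ c.support, c i * g i) = if g = g0 then 1 else 0 := by
    intro g
    have := congrFun hc g
    rw [Finsupp.sum] at this
    simpa [Φ, Finset.sum_apply, Pi.single_apply, eq_comm] using this
  set b : L →ₗ[K] L :=
    ∑ i ∈ c.support, (Algebra.lmul K L (c i) : L →ₗ[K] L) * f * (Algebra.lmul K L i) with hb
  have hbB : b ∈ B := by
    apply Subalgebra.sum_mem
    intro i _
    exact B.mul_mem (B.mul_mem (hLB (AlgHom.mem_range_self _ (c i))) hf)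
      (hLB (AlgHom.mem_range_self _ i))
  have hbval : b = a g0 • (g0.toLinearMap : L →ₗ[K] L) := by
    ext z
    have hfz : ∀ w : L, f w = ∑ g, a g * g w := by
      intro w
      rw [← hrep]
      simp [LinearMap.sum_apply, smul_eq_mul]
    have : b z = ∑ i ∈ c.support, c i * f (i * z) := by
      simp [hb, LinearMap.sum_apply, Module.End.mul_apply]
    rw [this]
    calc ∑ i ∈ c.support, c i * f (i * z)
        = ∑ i ∈ c.support, ∑ g, c i * (a g * (g i * g z)) := by
          refine Finset.sum_congr rfl fun i _ => ?_
          rw [hfz, Finset.mul_sum]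
          exact Finset.sum_congr rfl fun g _ => by rw [map_mul]
      _ = ∑ g, ∑ i ∈ c.support, c i * (a g * (g i * g z)) := Finset.sum_comm
      _ = ∑ g, (∑ i ∈ c.support, c i * g i) * (a g * g z) := by
          refine Finset.sum_congr rfl fun g _ => ?_
          rw [Finset.sum_mul]
          exact Finset.sum_congr rfl fun i _ => by ring
      _ = ∑ g, if g = g0 then a g * g z else 0 := by
          refine Finset.sum_congr rfl fun g _ => ?_
          rw [hdelta]
          split <;> simp
      _ = a g0 * g0 z := by simp
      _ = (a g0 • (g0.toLinearMap : L →ₗ[K] L)) z := by simp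
  rw [← hbval]; exact hbB

end key

/-- Every subalgebra of `End_K(L)` containing `L` (via multiplications) and contained
in `L ⋊ Aut_K(L)` is of the form `L ⋊ H = ⊕_{h ∈ H} L·h` for a unique subgroup `H`
of `Aut_K(L)`. -/
theorem stmt11 (K L : Type*) [Field K] [Field L] [Algebra K L] [FiniteDimensional K L]
    (B : Subalgebra K (Module.End K L)) (hLB : (Algebra.lmul K L).range ≤ B)
    (hBG : B ≤ skewGroupAlg K L) :
    ∃! H : Subgroup (L ≃ₐ[K] L),
      (B : Set (Module.End K L)) =
        (Submodule.span L ((fun g : L ≃ₐ[K] L => (g.toLinearMap : L →ₗ[K] L)) ''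
          (H : Set (L ≃ₐ[K] L))) : Set (L →ₗ[K] L)) := by
  classical
  have hBsmul : ∀ (a : L) (f : L →ₗ[K] L), f ∈ B → a • f ∈ B := by
    intro a f hfB
    rw [← lmul_mul]
    exact B.mul_mem (hLB (AlgHom.mem_range_self _ a)) hfB
  let H : Subgroup (L ≃ₐ[K] L) :=
    { carrier := {g | (g.toLinearMap : L →ₗ[K] L) ∈ B}
      one_mem' := by
        show ((1 : L ≃ₐ[K] L).toLinearMap : L →ₗ[K] L) ∈ B
        rw [e_one]; exact B.one_mem
      mul_mem' := fun {g h} hg hh => by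
        show ((g * h).toLinearMap : L →ₗ[K] L) ∈ B
        rw [← e_mul]; exact B.mul_mem hg hh
      inv_mem' := fun {g} hg => by
        show ((g⁻¹).toLinearMap : L →ₗ[K] L) ∈ B
        have hinv : g⁻¹ = g ^ (orderOf g - 1) := by
          apply inv_eq_of_mul_eq_one_right
          rw [← pow_succ', Nat.sub_add_cancel (orderOf_pos g), pow_orderOf_eq_one]
        rw [hinv, e_pow]
        exact pow_mem hg _ }
  have hspan_le : (Submodule.span L ((fun g : L ≃ₐ[K] L => (g.toLinearMap : L →ₗ[K] L)) ''
      (H : Set (L ≃ₐ[K] L))) : Set (L →ₗ[K] L)) ⊆ (B : Set (Module.End K L)) := by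
    intro x hx
    induction hx using Submodule.span_induction with
    | mem x hxm => obtain ⟨g, hg, rfl⟩ := hxm; exact hg
    | zero => exact B.zero_mem
    | add x y _ _ ihx ihy => exact B.add_mem ihx ihy
    | smul a x _ ihx => exact hBsmul a x ihx
  have hB_le : (B : Set (Module.End K L)) ⊆
      (Submodule.span L ((fun g : L ≃ₐ[K] L => (g.toLinearMap : L →ₗ[K] L)) ''
        (H : Set (L ≃ₐ[K] L))) : Set (L →ₗ[K] L)) := by
    intro f hfB
    have hfS : f ∈ Submodule.span L
        (Set.range fun g : L ≃ₐ[K] L => (g.toLinearMap : L →ₗ[K] L)) :=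
      skew_le_span K L (hBG hfB)
    obtain ⟨a, hrep⟩ := (Submodule.mem_span_range_iff_exists_fun L).mp hfS
    rw [show f = ∑ g, a g • (g.toLinearMap : L →ₗ[K] L) from hrep.symm]
    apply Submodule.sum_mem
    intro g _
    by_cases h0 : a g = 0
    · simp [h0]
    · have hterm : a g • (g.toLinearMap : L →ₗ[K] L) ∈ B := key K L B hLB f hfB a hrep g
      have hgB : (g.toLinearMap : L →ₗ[K] L) ∈ B := by
        have := hBsmul (a g)⁻¹ _ hterm
        rwa [smul_smul, inv_mul_cancel₀ h0, one_smul] at this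
      exact Submodule.smul_mem _ _ (Submodule.subset_span ⟨g, hgB, rfl⟩)
  refine ⟨H, subset_antisymm hB_le hspan_le, ?_⟩
  intro H' hH'
  ext g
  constructor
  · intro hg
    have hgB : (g.toLinearMap : L →ₗ[K] L) ∈ (B : Set (Module.End K L)) := by
      rw [hH']
      exact Submodule.subset_span ⟨g, hg, rfl⟩
    exact hgB
  · intro hg
    by_contra hn
    have hmem : (g.toLinearMap : L →ₗ[K] L) ∈
        Submodule.span L ((fun g : L ≃ₐ[K] L => (g.toLinearMap : L →ₗ[K] L)) ''
          (H' : Set (L ≃ₐ[K] L))) := by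
      have : (g.toLinearMap : L →ₗ[K] L) ∈ (B : Set (Module.End K L)) := hg
      rwa [hH'] at this
    exact (li_auts K L).notMem_span_image hn hmem
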